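/- Let F be an entrywise nonnegative n×n matrix and V a nonsingular M-matrix with V⁻¹ ≥ 0 entrywise. Then all eigenvalues of F − V have negative real part if and only if the spectral radius of F V⁻¹ is less than 1. -/

import Mathlib

open scoped ComplexOrder NNReal ENNReal
namespace Stmt7Aux
attribute [local instance] Matrix.linftyOpNormedAddCommGroup Matrix.linftyOpNormedRing
  Matrix.linftyOpNormedAlgebra
variable {n : ℕ}
local notation "M" => Matrix (Fin n) (Fin n) ℂ
@[local instance] def mComplete : CompleteSpace (Matrix (Fin n) (Fin n) ℂ) :=
  FiniteDimensional.complete ℂ _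
def NN (X : M) : Prop := ∀ i j, 0 ≤ X i j

lemma NN.add {X Y : M} (hX : NN X) (hY : NN Y) : NN (X + Y) := fun i j =>
  add_nonneg (hX i j) (hY i j)

lemma NN.mul {X Y : M} (hX : NN X) (hY : NN Y) : NN (X * Y) := fun i j => by
  rw [Matrix.mul_apply]
  exact Finset.sum_nonneg fun k _ => mul_nonneg (hX i k) (hY k j)

lemma NN.one : NN (1 : M) := fun i j => by
  by_cases h : i = j <;> simp [Matrix.one_apply, h]

lemma NN.smul {c : ℝ} (hc : 0 ≤ c) {X : M} (hX : NN X) : NN ((c : ℂ) • X) := fun i j => by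
  have : (0:ℂ) ≤ (c:ℂ) := Complex.zero_le_real.mpr hc
  simpa [Matrix.smul_apply, smul_eq_mul] using mul_nonneg this (hX i j)

lemma NN.pow {X : M} (hX : NN X) : ∀ k, NN (X ^ k)
  | 0 => by rw [pow_zero]; exact NN.one
  | (k+1) => by rw [pow_succ]; exact NN.mul (NN.pow hX k) hX

lemma nn_entry_norm {z : ℂ} (h : 0 ≤ z) : ‖z‖ = z.re := by
  obtain ⟨r, hr, rfl⟩ : ∃ r : ℝ, 0 ≤ r ∧ z = (r : ℂ) := by
    refine ⟨z.re, ?_, ?_⟩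
    · exact (Complex.le_def.mp h).1
    · apply Complex.ext <;> simp [(Complex.le_def.mp h).2.symm]
  simp [Complex.norm_real, abs_of_nonneg hr]

/-- entry evaluation as a continuous linear map -/
noncomputable def entryCLM (i j : Fin n) : Matrix (Fin n) (Fin n) ℂ →L[ℂ] ℂ :=
  LinearMap.toContinuousLinearMap (Matrix.entryLinearMap ℂ ℂ i j)

lemma entryCLM_apply (i j : Fin n) (X : M) : entryCLM i j X = X i j := rfl

lemma tsum_entry {f : ℕ → M} (hs : Summable f) (i j : Fin n) :
    (∑' k, f k) i j = ∑' k, f k i j := by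
  have := ContinuousLinearMap.map_tsum (entryCLM i j) hs
  simpa [entryCLM_apply] using this

lemma nn_tsum {f : ℕ → M} (hs : Summable f) (h : ∀ k, NN (f k)) : NN (∑' k, f k) := by
  intro i j
  rw [tsum_entry hs]
  have hsum : Summable fun k => f k i j :=
    ((entryCLM i j).summable (by exact hs) : _)
  rw [Complex.le_def]
  constructor
  · have : (∑' k, f k i j).re = ∑' k, (f k i j).re := by
      rw [← Complex.reCLM_apply, ContinuousLinearMap.map_tsum _ hsum]
      rfl
    rw [this]
    simp only [Complex.zero_re]
    exact tsum_nonneg fun k => (Complex.le_def.mp (h k i j)).1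
  · have : (∑' k, f k i j).im = ∑' k, (f k i j).im := by
      rw [← Complex.imCLM_apply, ContinuousLinearMap.map_tsum _ hsum]
      rfl
    rw [this]
    simp only [Complex.zero_im]
    exact (tsum_congr fun k => ((Complex.le_def.mp (h k i j)).2).symm).trans tsum_zero |>.symm

lemma norm_mono {X Y : M} (h : ∀ i j, ‖X i j‖ ≤ ‖Y i j‖) : ‖X‖ ≤ ‖Y‖ := by
  rw [Matrix.linfty_opNorm_def, Matrix.linfty_opNorm_def]
  have : ∀ i : Fin n, (∑ j, ‖X i j‖₊) ≤ Finset.univ.sup fun i => ∑ j, ‖Y i j‖₊ := by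
    intro i
    refine le_trans (Finset.sum_le_sum fun j _ => ?_)
      (Finset.le_sup (f := fun i => ∑ j, ‖Y i j‖₊) (Finset.mem_univ i))
    exact_mod_cast h i j
  exact_mod_cast Finset.sup_le fun i _ => this i

lemma norm_le_sum (X : M) : ‖X‖ ≤ ∑ i, ∑ j, ‖X i j‖ := by
  rw [Matrix.linfty_opNorm_def]
  have : (Finset.univ.sup fun i => ∑ j, ‖X i j‖₊) ≤ ∑ i, ∑ j, ‖X i j‖₊ :=
    Finset.sup_le fun i _ => Finset.single_le_sum (f := fun i => ∑ j, ‖X i j‖₊)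
      (fun _ _ => zero_le) (Finset.mem_univ i)
  calc ((Finset.univ.sup fun i => ∑ j, ‖X i j‖₊ : ℝ≥0) : ℝ)
      ≤ ((∑ i, ∑ j, ‖X i j‖₊ : ℝ≥0) : ℝ) := by exact_mod_cast this
    _ = ∑ i, ∑ j, ‖X i j‖ := by push_cast; rfl

lemma mem_spec {X : M} {μ : ℂ} :
    μ ∈ spectrum ℂ X ↔ ¬ IsUnit (μ • (1 : M) - X) := by
  rw [spectrum.mem_iff, Algebra.algebraMap_eq_smul_one]

lemma dom_mul {X X' B B' : M} (hB : NN B) (hB' : NN B')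
    (hX : ∀ i j, ‖X i j‖ ≤ ‖B i j‖) (hX' : ∀ i j, ‖X' i j‖ ≤ ‖B' i j‖) :
    ∀ i j, ‖(X * X') i j‖ ≤ ‖(B * B') i j‖ := by
  intro i j
  rw [Matrix.mul_apply, Matrix.mul_apply]
  have key : ‖∑ k, B i k * B' k j‖ = ∑ k, ‖B i k‖ * ‖B' k j‖ := by
    have h1 : ∀ k : Fin n, (0:ℂ) ≤ B i k * B' k j := fun k => mul_nonneg (hB i k) (hB' k j)
    rw [nn_entry_norm (Finset.sum_nonneg fun k _ => h1 k), Complex.re_sum]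
    refine Finset.sum_congr rfl fun k _ => ?_
    rw [← nn_entry_norm (h1 k), norm_mul]
  rw [key]
  refine le_trans (norm_sum_le _ _) (Finset.sum_le_sum fun k _ => ?_)
  exact le_trans (norm_mul_le _ _) (mul_le_mul (hX i k) (hX' k j) (norm_nonneg _)
    (le_trans (norm_nonneg _) (hX i k)))

lemma dom_pow {X B : M} (hB : NN B) (hX : ∀ i j, ‖X i j‖ ≤ ‖B i j‖) :
    ∀ k, ∀ i j, ‖(X ^ k) i j‖ ≤ ‖(B ^ k) i j‖
  | 0 => by intro i j; rw [pow_zero, pow_zero]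
  | (k+1) => by
      rw [pow_succ, pow_succ]
      exact dom_mul (NN.pow hB k) hB (dom_pow hB hX k) hX

lemma spec_small_of_pow_small {X : M} {k : ℕ} (hk : 1 ≤ k) (hX : ‖X ^ k‖ < 1)
    {μ : ℂ} (hμ : μ ∈ spectrum ℂ X) (hn : Nonempty (Fin n)) : ‖μ‖ < 1 := by
  have hmem : μ ^ k ∈ spectrum ℂ (X ^ k) := by
    rw [spectrum.map_pow_of_pos X hk]
    exact ⟨μ, hμ, rfl⟩
  have h1 : ‖μ ^ k‖ ≤ ‖X ^ k‖ := spectrum.norm_le_norm_of_mem hmem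
  have h2 : ‖μ‖ ^ k < 1 := by rw [← norm_pow]; exact lt_of_le_of_lt h1 hX
  have := (pow_lt_one_iff_of_nonneg (norm_nonneg μ) (by omega)).mp h2
  simpa using this

lemma gelfand_small {B : M} (hB : ∀ μ ∈ spectrum ℂ B, ‖μ‖ < 1) :
    ∃ k, 1 ≤ k ∧ ‖B ^ k‖ < 1 := by
  have hρ : spectralRadius ℂ B < 1 := by
    rcases Set.eq_empty_or_nonempty (spectrum ℂ B) with h | h
    · rw [spectralRadius, h]
      simp
    · obtain ⟨r, hr, hmax⟩ := (spectrum.isCompact B).exists_isMaxOn h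
        continuous_norm.continuousOn
      have hr1 : ‖r‖₊ < 1 := by
        have := hB r hr
        exact_mod_cast this
      have hcoe : ((‖r‖₊ : ℝ≥0∞)) < 1 := by exact_mod_cast hr1
      refine lt_of_le_of_lt (iSup₂_le fun k hk => ?_) hcoe
      have := hmax hk
      simp only [Set.mem_setOf_eq] at this
      exact_mod_cast this
  have htends := spectrum.pow_nnnorm_pow_one_div_tendsto_nhds_spectralRadius B
  have hev : ∀ᶠ k : ℕ in Filter.atTop, ((‖B ^ k‖₊ : ℝ≥0∞) ^ (1 / (k:ℝ))) < 1 :=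
    htends.eventually_lt_const hρ
  obtain ⟨k, hk1, hk2⟩ := (hev.and (Filter.eventually_ge_atTop 1)).exists
  refine ⟨k, hk2, ?_⟩
  by_contra hge
  push_neg at hge
  have h1 : (1 : ℝ≥0∞) ≤ (‖B ^ k‖₊ : ℝ≥0∞) := by
    exact_mod_cast (show (1:ℝ≥0) ≤ ‖B ^ k‖₊ by exact_mod_cast hge)
  have : (1:ℝ≥0∞) ≤ (‖B ^ k‖₊ : ℝ≥0∞) ^ (1 / (k:ℝ)) := by
    calc (1:ℝ≥0∞) = 1 ^ (1 / (k:ℝ)) := (ENNReal.one_rpow _).symm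
    _ ≤ (‖B ^ k‖₊ : ℝ≥0∞) ^ (1 / (k:ℝ)) :=
      ENNReal.rpow_le_rpow h1 (by positivity)
  exact absurd hk1 (not_lt.mpr this)

lemma comparison {X B : M} (hn : Nonempty (Fin n)) (hB : NN B)
    (hdom : ∀ i j, ‖X i j‖ ≤ ‖B i j‖)
    (hspec : ∀ μ ∈ spectrum ℂ B, ‖μ‖ < 1) :
    ∀ μ ∈ spectrum ℂ X, ‖μ‖ < 1 := by
  intro μ hμ
  obtain ⟨k, hk1, hk2⟩ := gelfand_small hspec
  have hXk : ‖X ^ k‖ ≤ ‖B ^ k‖ := norm_mono (dom_pow hB hdom k)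
  exact spec_small_of_pow_small hk1 (lt_of_le_of_lt hXk hk2) hμ hn

/-- geometric series inverse with nonnegative entries -/
lemma geom_inv_nn {X : M} (hX : NN X) (hnorm : ‖X‖ < 1) :
    ∃ W : M, NN W ∧ (1 - X) * W = 1 := by
  refine ⟨∑' k, X ^ k, ?_, mul_neg_geom_series X hnorm⟩
  exact nn_tsum (summable_geometric_of_norm_lt_one hnorm) (fun k => NN.pow hX k)

/-- Lemma L': spectral radius < 1 for a nonnegative matrix gives a nonnegative inverse
of `1 - C`. -/
lemma specsmall_inv_nn {C : M} (hC : NN C)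
    (hspec : ∀ μ ∈ spectrum ℂ C, ‖μ‖ < 1) :
    ∃ W : M, NN W ∧ (1 - C) * W = 1 := by
  obtain ⟨k, hk1, hk2⟩ := gelfand_small hspec
  obtain ⟨W₀, hW₀, hW₀inv⟩ := geom_inv_nn (NN.pow hC k) hk2
  refine ⟨(∑ j ∈ Finset.range k, C ^ j) * W₀, ?_, ?_⟩
  · exact NN.mul (fun i j => by
      rw [Matrix.sum_apply]
      exact Finset.sum_nonneg fun m _ => NN.pow hC m i j) hW₀
  · calc (1 - C) * ((∑ j ∈ Finset.range k, C ^ j) * W₀)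
        = ((1 - C) * ∑ j ∈ Finset.range k, C ^ j) * W₀ := by rw [mul_assoc]
      _ = (1 - C ^ k) * W₀ := by rw [mul_neg_geom_sum]
      _ = 1 := hW₀inv

/-- Lemma L: if `1 - C` has a nonnegative (left or right) inverse and `C` is nonnegative,
then the spectrum of `C` lies in the open unit disc. -/
lemma nn_inv_spec_small (hn : Nonempty (Fin n)) {C Mm : M} (hC : NN C) (hM : NN Mm)
    (hMinv : (1 - C) * Mm = 1) :
    ∀ μ ∈ spectrum ℂ C, ‖μ‖ < 1 := by
  have hMinv' : Mm * (1 - C) = 1 := mul_eq_one_comm.mp hMinv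
  have hrec : Mm = 1 + Mm * C := by
    have : Mm * 1 - Mm * C = 1 := by rw [← mul_sub]; exact hMinv'
    rw [mul_one] at this
    rw [← this]; abel
  have hpart : ∀ k : ℕ, Mm = (∑ j ∈ Finset.range k, C ^ j) + Mm * C ^ k := by
    intro k
    induction k with
    | zero => simp
    | succ k ih =>
      calc Mm = (∑ j ∈ Finset.range k, C ^ j) + Mm * C ^ k := ih
        _ = (∑ j ∈ Finset.range k, C ^ j) + (1 + Mm * C) * C ^ k := by rw [← hrec]
        _ = (∑ j ∈ Finset.range (k+1), C ^ j) + Mm * C ^ (k+1) := by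
            rw [Finset.sum_range_succ, pow_succ, add_mul, one_mul, mul_assoc, ← pow_succ',
              ← pow_succ]
            abel
  -- entrywise partial sums are bounded, hence entries of `C ^ k` tend to `0`
  have hbdd : ∀ i j : Fin n, ∀ k : ℕ,
      (∑ m ∈ Finset.range k, ((C ^ m) i j).re) ≤ (Mm i j).re := by
    intro i j k
    have := congrArg (fun X : M => (X i j).re) (hpart k)
    simp only [Matrix.add_apply, Matrix.sum_apply, Complex.add_re, Complex.re_sum] at this
    rw [this]
    have : 0 ≤ ((Mm * C ^ k) i j).re := (Complex.le_def.mp (NN.mul hM (NN.pow hC k) i j)).1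
    linarith
  have hsumm : ∀ i j : Fin n, Summable fun k => ((C ^ k) i j).re := by
    intro i j
    exact summable_of_sum_range_le (fun k => (Complex.le_def.mp (NN.pow hC k i j)).1)
      (hbdd i j)
  have htend : Filter.Tendsto (fun k => ∑ i, ∑ j, ((C ^ k) i j).re) Filter.atTop (nhds 0) := by
    have : ∀ i j : Fin n, Filter.Tendsto (fun k => ((C ^ k) i j).re) Filter.atTop (nhds 0) :=
      fun i j => (hsumm i j).tendsto_atTop_zero
    have h0 : (0:ℝ) = ∑ i : Fin n, ∑ j : Fin n, (0:ℝ) := by simp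
    rw [h0]
    exact tendsto_finset_sum _ fun i _ => tendsto_finset_sum _ fun j _ => this i j
  intro μ hμ
  by_contra habs
  push_neg at habs
  have hnorm1 : 1 ≤ ‖μ‖ := by exact habs
  have hev := (htend.eventually_lt_const (by norm_num : (0:ℝ) < 1)).and
    (Filter.eventually_ge_atTop 1)
  obtain ⟨k, hklt, hk1⟩ := hev.exists
  have hCk : ‖C ^ k‖ < 1 := by
    refine lt_of_le_of_lt (le_trans (norm_le_sum _) ?_) hklt
    refine le_of_eq (Finset.sum_congr rfl fun i _ => Finset.sum_congr rfl fun j _ => ?_)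
    exact nn_entry_norm (NN.pow hC k i j)
  exact absurd (spec_small_of_pow_small hk1 hCk hμ hn) (not_lt.mpr habs)

lemma norm_ofReal' {x : ℝ} (hx : 0 ≤ x) : ‖((x:ℝ):ℂ)‖ = x := by
  rw [Complex.norm_real]
  exact abs_of_nonneg hx

lemma base_lemma {P : M} (hP : NN P) {t : ℝ} (ht : ‖P‖ < t) :
    ∃ W : M, NN W ∧ (((t:ℝ):ℂ) • (1:M) - P) * W = 1 := by
  have ht0 : 0 < t := lt_of_le_of_lt (norm_nonneg P) ht
  have hX : ‖((t⁻¹ : ℝ) : ℂ) • P‖ < 1 := by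
    rw [norm_smul]
    rw [norm_ofReal' (le_of_lt (inv_pos.mpr ht0)), ← inv_mul_cancel₀ (ne_of_gt ht0)]
    exact (mul_lt_mul_iff_right₀ (inv_pos.mpr ht0)).mpr ht
  obtain ⟨W₀, hW₀, hW₀inv⟩ := geom_inv_nn (NN.smul (le_of_lt (inv_pos.mpr ht0)) hP) hX
  refine ⟨((t⁻¹:ℝ):ℂ) • W₀, NN.smul (le_of_lt (inv_pos.mpr ht0)) hW₀, ?_⟩
  have key : ((t:ℝ):ℂ) • (1:M) - P = ((t:ℝ):ℂ) • (1 - ((t⁻¹:ℝ):ℂ) • P) := by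
    rw [smul_sub, smul_smul]
    push_cast
    rw [mul_inv_cancel₀ (by exact_mod_cast ne_of_gt ht0)]
    simp
  rw [key, smul_mul_assoc, mul_smul_comm, smul_smul]
  have : ((t:ℝ):ℂ) * ((t⁻¹:ℝ):ℂ) = 1 := by
    push_cast
    exact mul_inv_cancel₀ (by exact_mod_cast ne_of_gt ht0)
  rw [this, one_smul, hW₀inv]

lemma step_lemma {P : M} (hP : NN P) {t u : ℝ} (htu : t ≤ u) {Mu : M} (hMu : NN Mu)
    (hinvu : (((u:ℝ):ℂ) • (1:M) - P) * Mu = 1) (hsmall : (u - t) * ‖Mu‖ < 1) :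
    ∃ W : M, NN W ∧ (((t:ℝ):ℂ) • (1:M) - P) * W = 1 := by
  set Y : M := (((u - t : ℝ)):ℂ) • Mu with hY
  have hYnn : NN Y := NN.smul (by linarith) hMu
  have hYnorm : ‖Y‖ < 1 := by
    rw [hY, norm_smul, norm_ofReal' (by linarith : (0:ℝ) ≤ u - t)]
    exact hsmall
  have hfac : ((t:ℝ):ℂ) • (1:M) - P = (((u:ℝ):ℂ) • (1:M) - P) * (1 - Y) := by
    rw [mul_sub, mul_one, hY, mul_smul_comm, hinvu]
    have : ((t:ℝ):ℂ) • (1:M) = ((u:ℝ):ℂ) • (1:M) - (((u - t:ℝ)):ℂ) • (1:M) := by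
      rw [← sub_smul]
      push_cast
      ring_nf
    rw [this]
    abel
  refine ⟨(∑' k, Y ^ k) * Mu, NN.mul (nn_tsum (summable_geometric_of_norm_lt_one hYnorm)
    (fun k => NN.pow hYnn k)) hMu, ?_⟩
  rw [hfac, mul_assoc, ← mul_assoc (1 - Y), (show (1 - Y) * ∑' k, Y ^ k = 1 from mul_neg_geom_series Y hYnorm), one_mul, hinvu]

lemma cont_lemma {P : M} (hP : NN P) {s : ℝ}
    (hinv : ∀ t : ℝ, s ≤ t → IsUnit (((t:ℝ):ℂ) • (1:M) - P)) :
    ∃ W : M, NN W ∧ (((s:ℝ):ℂ) • (1:M) - P) * W = 1 := by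
  classical
  set c : ℝ := max s (‖P‖ + 1) with hc
  have hcs : s ≤ c := le_max_left _ _
  have hcP : ‖P‖ < c := lt_of_lt_of_le (by linarith [norm_nonneg P]) (le_max_right _ _)
  set g : ℝ → M := fun t => ((t:ℝ):ℂ) • (1:M) - P with hg
  set f : ℝ → M := fun t => (g t)⁻¹ with hf
  have hginv : ∀ t : ℝ, s ≤ t → g t * f t = 1 := by
    intro t ht
    exact Matrix.mul_nonsing_inv _ ((Matrix.isUnit_iff_isUnit_det _).mp (hinv t ht))
  -- continuity and boundedness of f on [s, c]
  have hgcont : Continuous g := by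
    exact (Complex.continuous_ofReal.smul continuous_const).sub continuous_const
  have hfc : ContinuousOn f (Set.Icc s c) := by
    intro t ht
    have hdet : IsUnit (g t).det := (Matrix.isUnit_iff_isUnit_det _).mp (hinv t ht.1)
    obtain ⟨udet, hudet⟩ := hdet
    have h1 : ContinuousAt Ring.inverse ((g t).det) := by
      rw [← hudet]
      exact NormedRing.inverse_continuousAt udet
    exact ((continuousAt_matrix_inv (g t) h1).comp hgcont.continuousAt).continuousWithinAt
  obtain ⟨K, hK⟩ := (isCompact_Icc : IsCompact (Set.Icc s c)).exists_bound_of_continuousOn hfc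
  have hK0 : 0 ≤ K := le_trans (norm_nonneg _) (hK c ⟨hcs, le_refl c⟩)
  set δ : ℝ := (2 * (K + 1))⁻¹ with hδ
  have hδ0 : 0 < δ := by positivity
  have key : ∀ k : ℕ, ∀ t : ℝ, s ≤ t → c - k * δ ≤ t → NN (f t) := by
    intro k
    induction k with
    | zero =>
      intro t hst hct
      simp only [Nat.cast_zero, zero_mul, sub_zero] at hct
      obtain ⟨W, hW, hWinv⟩ := base_lemma hP (lt_of_lt_of_le hcP hct)
      have : f t = W := Matrix.inv_eq_right_inv hWinv
      rwa [this]
    | succ k ih =>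
      intro t hst hct
      by_cases hc' : c - k * δ ≤ t
      · exact ih t hst hc'
      push_neg at hc'
      set u : ℝ := min c (t + δ) with hu
      have htc : t < c := lt_of_lt_of_le hc' (sub_le_self _ (by positivity))
      have htu : t ≤ u := le_min htc.le (by linarith)
      have hsu : s ≤ u := le_trans hst htu
      have hu_le_c : u ≤ c := min_le_left _ _
      have hu_ge : c - k * δ ≤ u := by
        refine le_min (sub_le_self _ (by positivity)) ?_
        have : c - (k + 1 : ℕ) * δ ≤ t := hct
        push_cast at this
        linarith
      have hfu : NN (f u) := ih u hsu hu_ge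
      have hfu_inv : g u * f u = 1 := hginv u hsu
      have hKu : ‖f u‖ ≤ K := hK u ⟨hsu, hu_le_c⟩
      have hsmall : (u - t) * ‖f u‖ < 1 := by
        have h1 : u - t ≤ δ := by
          have : u ≤ t + δ := min_le_right _ _
          linarith
        have h2 : (u - t) * ‖f u‖ ≤ δ * (K + 1) := by
          apply mul_le_mul h1 (by linarith) (norm_nonneg _) hδ0.le
        have h3 : δ * (K + 1) < 1 := by
          rw [hδ]
          rw [inv_mul_lt_iff₀ (by positivity)]
          linarith
        linarith
      obtain ⟨W, hW, hWinv⟩ := step_lemma hP htu hfu hfu_inv hsmall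
      have : f t = W := Matrix.inv_eq_right_inv hWinv
      rwa [this]
  obtain ⟨k, hk⟩ := exists_nat_ge ((c - s) / δ)
  have hks : c - k * δ ≤ s := by
    rw [div_le_iff₀ hδ0] at hk
    linarith
  have : NN (f s) := key k s (le_refl s) hks
  exact ⟨f s, this, hginv s (le_refl s)⟩

theorem main (hn : 0 < n) (F V : Matrix (Fin n) (Fin n) ℝ)
    (hF : ∀ i j, 0 ≤ F i j)
    (hVZ : ∀ p q, p ≠ q → V p q ≤ 0)
    (hVunit : IsUnit V.det)
    (hVinv : ∀ i j, 0 ≤ V⁻¹ i j) :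
    (∀ μ ∈ spectrum ℂ ((F - V).map Complex.ofReal), μ.re < 0) ↔
      (∀ μ ∈ spectrum ℂ ((F * V⁻¹).map Complex.ofReal), ‖μ‖ < 1) := by
  classical
  have hne : Nonempty (Fin n) := ⟨⟨0, hn⟩⟩
  -- complex versions
  set 𝔽 : M := F.map Complex.ofReal with h𝔽
  set 𝕍 : M := V.map Complex.ofReal with h𝕍
  set 𝕍i : M := V⁻¹.map Complex.ofReal with h𝕍i
  have hmapmul : ∀ A B : Matrix (Fin n) (Fin n) ℝ,
      (A * B).map Complex.ofReal = A.map Complex.ofReal * B.map Complex.ofReal := by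
    intro A B
    ext i j
    simp only [Matrix.map_apply, Matrix.mul_apply]
    push_cast
    rfl
  have hmapsub : ∀ A B : Matrix (Fin n) (Fin n) ℝ,
      (A - B).map Complex.ofReal = A.map Complex.ofReal - B.map Complex.ofReal := by
    intro A B
    ext i j
    simp [Matrix.map_apply]
  have hmap1 : (1 : Matrix (Fin n) (Fin n) ℝ).map Complex.ofReal = 1 :=
    Matrix.map_one _ Complex.ofReal_zero Complex.ofReal_one
  have hVV : V * V⁻¹ = 1 := Matrix.mul_nonsing_inv V hVunit
  have hVV' : V⁻¹ * V = 1 := Matrix.nonsing_inv_mul V hVunit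
  have h1 : 𝕍 * 𝕍i = 1 := by rw [h𝕍, h𝕍i, ← hmapmul, hVV, hmap1]
  have h1' : 𝕍i * 𝕍 = 1 := by rw [h𝕍, h𝕍i, ← hmapmul, hVV', hmap1]
  have hFnn : NN 𝔽 := fun i j => Complex.zero_le_real.mpr (hF i j)
  have hVinn : NN 𝕍i := fun i j => Complex.zero_le_real.mpr (hVinv i j)
  -- the diagonal of V is positive
  have hdiag : ∀ p, 0 < V p p := by
    intro p
    by_contra hp
    push_neg at hp
    have hd := congrArg (fun X : Matrix (Fin n) (Fin n) ℝ => X p p) hVV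
    simp only [Matrix.mul_apply, Matrix.one_apply_eq] at hd
    have hle : (∑ k, V p k * V⁻¹ k p) ≤ 0 := by
      refine Finset.sum_nonpos fun k _ => ?_
      by_cases hk : p = k
      · subst hk
        exact mul_nonpos_of_nonpos_of_nonneg hp (hVinv p p)
      · exact mul_nonpos_of_nonpos_of_nonneg (hVZ p k hk) (hVinv k p)
    rw [hd] at hle
    norm_num at hle
  -- diagonal matrices
  set D : M := Matrix.diagonal (fun i => ((V i i : ℝ) : ℂ)) with hD
  set Di : M := Matrix.diagonal (fun i => (((V i i)⁻¹ : ℝ) : ℂ)) with hDi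
  have hdiagne : ∀ i, ((V i i : ℝ) : ℂ) ≠ 0 := fun i => by
    exact_mod_cast ne_of_gt (hdiag i)
  have hDDi : D * Di = 1 := by
    rw [hD, hDi, Matrix.diagonal_mul_diagonal, ← Matrix.diagonal_one]
    refine congrArg Matrix.diagonal (funext fun i => ?_)
    push_cast
    exact mul_inv_cancel₀ (hdiagne i)
  have hDiD : Di * D = 1 := mul_eq_one_comm.mp hDDi
  have hDinn : NN Di := fun i j => by
    rw [hDi]
    by_cases h : i = j
    · subst h
      rw [Matrix.diagonal_apply_eq]
      exact Complex.zero_le_real.mpr (le_of_lt (inv_pos.mpr (hdiag i)))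
    · rw [Matrix.diagonal_apply_ne _ h]
  -- the matrix B
  set B : M := D - 𝕍 + 𝔽 with hB
  have hBnn : NN B := by
    intro i j
    rw [hB]
    simp only [Matrix.add_apply, Matrix.sub_apply]
    by_cases h : i = j
    · subst h
      rw [hD, Matrix.diagonal_apply_eq, h𝕍, h𝔽]
      simp only [Matrix.map_apply]
      rw [sub_self, zero_add]
      exact Complex.zero_le_real.mpr (hF i i)
    · rw [hD, Matrix.diagonal_apply_ne _ h, h𝕍, h𝔽]
      simp only [Matrix.map_apply, zero_sub]
      have : -(V i j : ℂ) + (F i j : ℂ) = ((F i j - V i j : ℝ) : ℂ) := by push_cast; ring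
      rw [this]
      exact Complex.zero_le_real.mpr (by nlinarith [hVZ i j h, hF i j])
  have hDB : D - B = 𝕍 - 𝔽 := by rw [hB]; abel
  rw [hmapsub, hmapmul, ← h𝔽, ← h𝕍, ← h𝕍i]
  constructor
  · -- LHS → RHS
    intro hL
    set s : ℝ := 1 + ∑ i, |V i i - F i i| with hs
    have hs_ge : ∀ i, V i i - F i i ≤ s := by
      intro i
      have h2 := Finset.single_le_sum (f := fun i => |V i i - F i i|)
        (fun _ _ => abs_nonneg _) (Finset.mem_univ i)
      have h3 := le_abs_self (V i i - F i i)
      rw [hs]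
      linarith
    set P : M := ((s • (1 : Matrix (Fin n) (Fin n) ℝ)) - (V - F)).map Complex.ofReal with hP
    have hPnn : NN P := by
      intro i j
      rw [hP]
      simp only [Matrix.map_apply, Matrix.sub_apply, Matrix.smul_apply, smul_eq_mul]
      by_cases h : i = j
      · subst h
        rw [Matrix.one_apply_eq]
        exact Complex.zero_le_real.mpr (by have := hs_ge i; linarith)
      · rw [Matrix.one_apply_ne h]
        exact Complex.zero_le_real.mpr (by have := hVZ i j h; have := hF i j; linarith)
    have hPeq : ((s:ℝ):ℂ) • (1:M) - P = 𝕍 - 𝔽 := by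
      ext i j
      rw [hP, h𝕍, h𝔽]
      simp only [Matrix.sub_apply, Matrix.smul_apply, Matrix.map_apply, Matrix.smul_apply,
        smul_eq_mul]
      by_cases h : i = j
      · subst h
        rw [Matrix.one_apply_eq, Matrix.one_apply_eq]
        push_cast
        ring
      · rw [Matrix.one_apply_ne h, Matrix.one_apply_ne h]
        push_cast
        ring
    have hinvall : ∀ t : ℝ, s ≤ t → IsUnit (((t:ℝ):ℂ) • (1:M) - P) := by
      intro t ht
      have heq : ((t:ℝ):ℂ) • (1:M) - P = (((t - s:ℝ)):ℂ) • (1:M) - (𝔽 - 𝕍) := by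
        have hsplit : ((t:ℝ):ℂ) • (1:M) = (((t - s:ℝ)):ℂ) • (1:M) + ((s:ℝ):ℂ) • (1:M) := by
          rw [← add_smul]
          norm_cast
          rw [sub_add_cancel]
        rw [hsplit, add_sub_assoc, hPeq]
        abel
      rw [heq]
      by_contra h
      have hmem : (((t - s:ℝ)):ℂ) ∈ spectrum ℂ (𝔽 - 𝕍) := mem_spec.mpr h
      have := hL _ hmem
      rw [Complex.ofReal_re] at this
      linarith
    obtain ⟨W, hWnn, hWinv⟩ := cont_lemma hPnn hinvall
    rw [hPeq] at hWinv
    have hfac : (𝕍 - 𝔽) * 𝕍i = 1 - 𝔽 * 𝕍i := by rw [sub_mul, h1]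
    have hM : (1 - 𝔽 * 𝕍i) * (𝕍 * W) = 1 := by
      rw [← hfac, mul_assoc, ← mul_assoc 𝕍i, h1', one_mul, hWinv]
    have hMnn : NN (𝕍 * W) := by
      have : 𝕍 * W = 1 + 𝔽 * W := by
        rw [← hWinv, ← add_mul, sub_add_cancel]
      rw [this]
      exact NN.add NN.one (NN.mul hFnn hWnn)
    exact nn_inv_spec_small hne (NN.mul hFnn hVinn) hMnn hM
  · -- RHS → LHS
    intro hR μ hμ
    by_contra hre
    push_neg at hre
    obtain ⟨Mm, hMm, hMminv⟩ := specsmall_inv_nn (NN.mul hFnn hVinn) hR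
    have hfac : (1 - 𝔽 * 𝕍i) * 𝕍 = 𝕍 - 𝔽 := by
      rw [sub_mul, one_mul, mul_assoc, h1', mul_one]
    set W : M := 𝕍i * Mm with hW
    have hWnn : NN W := NN.mul hVinn hMm
    have hAW : (𝕍 - 𝔽) * W = 1 := by
      rw [← hfac, hW, mul_assoc, ← mul_assoc 𝕍, h1, one_mul, hMminv]
    -- spectrum of B * Di is in the unit disc
    have hfac2 : (1 - B * Di) * (D * W) = 1 := by
      have e1 : 1 - B * Di = (D - B) * Di := by rw [sub_mul, hDDi]
      rw [e1, mul_assoc, ← mul_assoc Di, hDiD, one_mul, hDB, hAW]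
    have hDWnn : NN (D * W) := by
      have : D * W = 1 + B * W := by
        have : (D - B) * W = 1 := by rw [hDB, hAW]
        rw [← this, ← add_mul, sub_add_cancel]
      rw [this]
      exact NN.add NN.one (NN.mul hBnn hWnn)
    have hBDi : ∀ ν ∈ spectrum ℂ (B * Di), ‖ν‖ < 1 :=
      nn_inv_spec_small hne (NN.mul hBnn hDinn) hDWnn hfac2
    -- the perturbed diagonal
    set Dμ : M := Matrix.diagonal (fun i => ((V i i : ℝ) : ℂ) + μ) with hDμ
    set Dμi : M := Matrix.diagonal (fun i => (((V i i : ℝ) : ℂ) + μ)⁻¹) with hDμi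
    have hzre : ∀ i, 0 < (((V i i : ℝ) : ℂ) + μ).re := by
      intro i
      simp only [Complex.add_re, Complex.ofReal_re]
      have := hdiag i
      linarith
    have hz : ∀ i, ((V i i : ℝ) : ℂ) + μ ≠ 0 := by
      intro i h0
      have := hzre i
      rw [h0] at this
      simp at this
    have hDμDμi : Dμ * Dμi = 1 := by
      rw [hDμ, hDμi, Matrix.diagonal_mul_diagonal, ← Matrix.diagonal_one]
      exact congrArg Matrix.diagonal (funext fun i => mul_inv_cancel₀ (hz i))
    have hDμiDμ : Dμi * Dμ = 1 := mul_eq_one_comm.mp hDμDμi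
    set X : M := B * Dμi with hX
    have hdom : ∀ i j, ‖X i j‖ ≤ ‖(B * Di) i j‖ := by
      intro i j
      rw [hX, hDμi, hDi, Matrix.mul_diagonal, Matrix.mul_diagonal, norm_mul, norm_mul]
      refine mul_le_mul_of_nonneg_left ?_ (norm_nonneg _)
      rw [norm_inv]
      have hVj := hdiag j
      have habs : (V j j : ℝ) ≤ ‖((V j j : ℝ) : ℂ) + μ‖ := by
        refine le_trans ?_ (Complex.abs_re_le_norm _)
        rw [Complex.add_re, Complex.ofReal_re]
        have h2 : V j j ≤ V j j + μ.re := by linarith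
        exact le_trans h2 (le_abs_self _)
      have hpos : (0:ℝ) < ‖((V j j : ℝ) : ℂ) + μ‖ := lt_of_lt_of_le hVj habs
      rw [norm_ofReal' (le_of_lt (inv_pos.mpr hVj))]
      exact (inv_le_inv₀ hpos hVj).mpr habs
    have hXspec := comparison hne (NN.mul hBnn hDinn) hdom hBDi
    have hX1 : IsUnit (1 - X) := by
      by_contra h
      have hmem : (1:ℂ) ∈ spectrum ℂ X := mem_spec.mpr (by simpa using h)
      have := hXspec 1 hmem
      simp at this
    have hDμunit : IsUnit Dμ := ⟨⟨Dμ, Dμi, hDμDμi, hDμiDμ⟩, rfl⟩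
    have heq : μ • (1:M) - (𝔽 - 𝕍) = (1 - X) * Dμ := by
      rw [sub_mul, one_mul, hX, mul_assoc, hDμiDμ, mul_one]
      have hμ1 : μ • (1:M) = Matrix.diagonal (fun _ => μ) := by
        ext i j
        by_cases h : i = j
        · subst h; simp
        · simp [Matrix.one_apply_ne h, Matrix.diagonal_apply_ne _ h]
      have hDμsplit : Dμ = D + Matrix.diagonal (fun _ : Fin n => μ) := by
        rw [hDμ, hD]
        ext i j
        by_cases h : i = j
        · subst h; simp
        · simp [Matrix.diagonal_apply_ne _ h]
      rw [hDμsplit, hμ1, hB]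
      abel
    exact (mem_spec.mp hμ) (heq ▸ (hX1.mul hDμunit))

end Stmt7Aux

theorem stmt_7 {n : ℕ} (F V : Matrix (Fin n) (Fin n) ℝ)
    (hF : ∀ i j, 0 ≤ F i j)
    (hVZ : ∀ p q, p ≠ q → V p q ≤ 0)
    (hVunit : IsUnit V.det)
    (hVinv : ∀ i j, 0 ≤ V⁻¹ i j) :
    (∀ μ ∈ spectrum ℂ ((F - V).map Complex.ofReal), μ.re < 0) ↔
      (∀ μ ∈ spectrum ℂ ((F * V⁻¹).map Complex.ofReal), ‖μ‖ < 1) := by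
  rcases Nat.eq_zero_or_pos n with hn | hn
  · subst hn
    have hempty : ∀ X : Matrix (Fin 0) (Fin 0) ℂ, spectrum ℂ X = ∅ := by
      intro X
      ext μ
      simp only [Set.mem_empty_iff_false, iff_false]
      intro h
      exact (spectrum.mem_iff.mp h) (isUnit_of_subsingleton _)
    constructor <;> intro _ μ hμ <;> rw [hempty] at hμ <;> exact absurd hμ (Set.notMem_empty μ)
  · exact Stmt7Aux.main hn F V hF hVZ hVunit hVinv
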